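/- For all natural numbers n ≥ 1 and all natural numbers k: 2n · ∑_{j=0}^{n} j^k · binomial(2n-1, n-j) = n · ∑_{j=0}^{n} j^k · binomial(2n, n-j) + ∑_{j=0}^{n} j^{k+1} · binomial(2n, n-j). -/

import Mathlib

theorem Btilde_B_relation (n : ℕ) (hn : 1 ≤ n) (k : ℕ) :
    2 * n * ∑ j ∈ Finset.range (n + 1), j ^ k * Nat.choose (2 * n - 1) (n - j) =
      n * (∑ j ∈ Finset.range (n + 1), j ^ k * Nat.choose (2 * n) (n - j)) +
        ∑ j ∈ Finset.range (n + 1), j ^ (k + 1) * Nat.choose (2 * n) (n - j) := by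
  rw [Finset.mul_sum, Finset.mul_sum, ← Finset.sum_add_distrib]
  refine Finset.sum_congr rfl ?_
  intro j hj
  have hj' : j ≤ n := Nat.lt_succ_iff.mp (Finset.mem_range.mp hj)
  have h1 : Nat.choose (2*n-1) (n-j) = Nat.choose (2*n-1) (n+j-1) := by
    have := Nat.choose_symm (show n+j-1 ≤ 2*n-1 by omega)
    have e : 2*n-1 - (n+j-1) = n - j := by omega
    rw [e] at this
    exact this
  have h2 : 2*n * Nat.choose (2*n-1) (n+j-1) = Nat.choose (2*n) (n+j) * (n+j) := by
    have := Nat.add_one_mul_choose_eq (2*n-1) (n+j-1)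
    have e1 : 2*n-1+1 = 2*n := by omega
    have e2 : n+j-1+1 = n+j := by omega
    rw [e1, e2] at this
    exact this
  have h3 : Nat.choose (2*n) (n+j) = Nat.choose (2*n) (n-j) := by
    have := Nat.choose_symm (show n+j ≤ 2*n by omega)
    have e : 2*n - (n+j) = n - j := by omega
    rw [e] at this
    exact this.symm
  calc 2 * n * (j ^ k * Nat.choose (2*n-1) (n-j))
      = j ^ k * (2*n * Nat.choose (2*n-1) (n+j-1)) := by rw [h1]; ring
    _ = j ^ k * (Nat.choose (2*n) (n-j) * (n+j)) := by rw [h2, h3]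
    _ = n * (j ^ k * Nat.choose (2*n) (n-j)) + j ^ (k+1) * Nat.choose (2*n) (n-j) := by ring
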